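/- Let A and B be finite posets and let g : A → B and f : B → A be order-preserving maps forming a Galois connection g ⊣ f (i.e. for all a ∈ A and b ∈ B, g(a) ≤ b if and only if a ≤ f(b)). Then for every b ∈ A and every a ∈ B, Σ_{b' ∈ B with f(b') = b} μ_B(a, b') = Σ_{a' ∈ A with g(a') = a} μ_A(a', b). -/
import Mathlib


-- `μ` is the Möbius function of the finite poset `P`: `μ x y` (for `y ≤ x`) is the unique
-- integer-valued function such that `μ x y = 0` whenever `¬ y ≤ x`, and for all `c ≤ a`,
-- `∑_{b : c ≤ b ≤ a} μ b c = δ_{a,c}` and `∑_{b : c ≤ b ≤ a} μ a b = δ_{a,c}`.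
open Classical in
def IsMobiusFn {P : Type*} [PartialOrder P] [Fintype P] (μ : P → P → ℤ) : Prop :=
  (∀ x y : P, ¬ y ≤ x → μ x y = 0) ∧
  (∀ a c : P, c ≤ a →
    (∑ b ∈ Finset.univ.filter (fun b => c ≤ b ∧ b ≤ a), μ b c) = if a = c then 1 else 0) ∧
  (∀ a c : P, c ≤ a →
    (∑ b ∈ Finset.univ.filter (fun b => c ≤ b ∧ b ≤ a), μ a b) = if a = c then 1 else 0)

open Classical in
-- Let `A` and `B` be finite posets and `g : A → B`, `f : B → A` order-preserving maps
-- forming a Galois connection `g ⊣ f`.  Then for every `b ∈ A` and every `a ∈ B`,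
-- `∑_{b' ∈ B, f b' = b} μ_B a b' = ∑_{a' ∈ A, g a' = a} μ_A a' b`.
theorem stmt0 {A B : Type*} [PartialOrder A] [Fintype A] [PartialOrder B] [Fintype B]
    (g : A → B) (f : B → A) (hg : Monotone g) (hf : Monotone f)
    (hgal : ∀ (a : A) (b : B), g a ≤ b ↔ a ≤ f b)
    (μA : A → A → ℤ) (hμA : IsMobiusFn μA)
    (μB : B → B → ℤ) (hμB : IsMobiusFn μB)
    (b : A) (a : B) :
    (∑ b' ∈ Finset.univ.filter (fun b' : B => f b' = b), μB a b') =
      (∑ a' ∈ Finset.univ.filter (fun a' : A => g a' = a), μA a' b) := by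
  obtain ⟨hA0, hA1, _⟩ := hμA
  obtain ⟨hB0, _, hB2⟩ := hμB
  have key1 : ∀ b' : B,
      (∑ a' : A, μA a' b * (if a' ≤ f b' then (1:ℤ) else 0)) =
        if f b' = b then 1 else 0 := by
    intro b'
    have h : (∑ a' : A, μA a' b * (if a' ≤ f b' then (1:ℤ) else 0)) =
        ∑ a' ∈ Finset.univ.filter (fun a' => b ≤ a' ∧ a' ≤ f b'), μA a' b := by
      rw [Finset.sum_filter]
      apply Finset.sum_congr rfl
      intro x _
      by_cases h1 : x ≤ f b' <;> by_cases h2 : b ≤ x <;>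
        simp [h1, h2, hA0 x b]
    rw [h]
    by_cases hb : b ≤ f b'
    · exact hA1 (f b') b hb
    · rw [Finset.sum_eq_zero, if_neg]
      · intro heq; exact hb (heq ▸ le_refl b)
      · intro x hx
        simp only [Finset.mem_filter] at hx
        exact absurd (le_trans hx.2.1 hx.2.2) hb
  have key2 : ∀ a' : A,
      (∑ b' : B, (if g a' ≤ b' then (1:ℤ) else 0) * μB a b') =
        if a = g a' then 1 else 0 := by
    intro a'
    have h : (∑ b' : B, (if g a' ≤ b' then (1:ℤ) else 0) * μB a b') =
        ∑ b' ∈ Finset.univ.filter (fun b' => g a' ≤ b' ∧ b' ≤ a), μB a b' := by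
      rw [Finset.sum_filter]
      apply Finset.sum_congr rfl
      intro x _
      by_cases h1 : g a' ≤ x <;> by_cases h2 : x ≤ a <;>
        simp [h1, h2, hB0 a x]
    rw [h]
    by_cases hb : g a' ≤ a
    · exact hB2 a (g a') hb
    · rw [Finset.sum_eq_zero, if_neg]
      · intro heq; exact hb (heq ▸ le_refl (g a'))
      · intro x hx
        simp only [Finset.mem_filter] at hx
        exact absurd (le_trans hx.2.1 hx.2.2) hb
  calc (∑ b' ∈ Finset.univ.filter (fun b' : B => f b' = b), μB a b')
      = ∑ b' : B, (if f b' = b then (1:ℤ) else 0) * μB a b' := by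
        rw [Finset.sum_filter]
        apply Finset.sum_congr rfl
        intro x _
        by_cases h1 : f x = b <;> simp [h1]
    _ = ∑ b' : B, (∑ a' : A, μA a' b * (if a' ≤ f b' then (1:ℤ) else 0)) * μB a b' := by
        apply Finset.sum_congr rfl
        intro x _
        rw [key1 x]
    _ = ∑ b' : B, ∑ a' : A, μA a' b * (if a' ≤ f b' then (1:ℤ) else 0) * μB a b' := by
        apply Finset.sum_congr rfl; intro x _
        rw [Finset.sum_mul]
    _ = ∑ a' : A, ∑ b' : B, μA a' b * (if a' ≤ f b' then (1:ℤ) else 0) * μB a b' :=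
        Finset.sum_comm
    _ = ∑ a' : A, μA a' b * ∑ b' : B, (if g a' ≤ b' then (1:ℤ) else 0) * μB a b' := by
        apply Finset.sum_congr rfl; intro x _
        rw [Finset.mul_sum]
        apply Finset.sum_congr rfl; intro y _
        have h : (x ≤ f y) = (g x ≤ y) := propext (hgal x y).symm
        rw [mul_assoc, h]
    _ = ∑ a' : A, μA a' b * (if a = g a' then (1:ℤ) else 0) := by
        apply Finset.sum_congr rfl; intro x _
        rw [key2 x]
    _ = ∑ a' ∈ Finset.univ.filter (fun a' : A => g a' = a), μA a' b := by
        rw [Finset.sum_filter]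
        apply Finset.sum_congr rfl
        intro x _
        by_cases h1 : g x = a
        · rw [if_pos h1.symm, if_pos h1, mul_one]
        · rw [if_neg (fun h => h1 h.symm), if_neg h1, mul_zero]
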